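/- Let q = 2^h, h > p+1, m ≥ 2, k = 0, r = 1. The Class II code C = ∪_{π} { b'_π + a : a ∈ ZRM_{2^h}^p(1,m) }, where π ranges over all permutations of {0,...,m-1} and b'_π is the vector associated with 2^{h-1}·Σ_{α=0}^{m-2} x_{π(α)} x_{π(α+1)}, is contained in ZRM_{2^h}^{p+1}(2,m), and consequently for any two distinct codewords u, v ∈ C, the Hamming distance between u and v is at least 2^{m-2} and the Lee distance is at least 2^{m-1+p}. -/

import Mathlib

open Finset

/-- The binary expansion of `i`, as a point of `ℤ₂^m`. -/
def bits (m : ℕ) (i : ℕ) : Fin m → ZMod 2 := fun j => if Nat.testBit i j.val then 1 else 0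

/-- Admissibility condition on ANF coefficients for `ZRM_{2^h}^p(r,m)`. -/
def zrmCond (h p r m : ℕ) (c : Finset (Fin m) → ZMod (2 ^ h)) : Prop :=
  ∀ S : Finset (Fin m),
    (r < S.card → c S = 0) ∧
    (r - p < S.card → S.card ≤ r →
      ∃ u : ZMod (2 ^ h), c S = 2 ^ (S.card - (r - p)) * u)

/-- The vector of length `2^m` associated with ANF coefficients `c`. -/
def anfVec (h m : ℕ) (c : Finset (Fin m) → ZMod (2 ^ h)) : Fin (2 ^ m) → ZMod (2 ^ h) :=
  fun i => ∑ S : Finset (Fin m), c S * ∏ α ∈ S, ((bits m i.val α).val : ZMod (2 ^ h))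

/-- The code `ZRM_{2^h}^p(r,m)`. -/
def ZRM (h p r m : ℕ) : Set (Fin (2 ^ m) → ZMod (2 ^ h)) :=
  {v | ∃ c : Finset (Fin m) → ZMod (2 ^ h), zrmCond h p r m c ∧ v = anfVec h m c}

/-- The vector associated with the quadratic form `2^{h-1}·∑_{α=0}^{m-2} x_{π(α)}x_{π(α+1)}`
for a permutation `π` of `{0,…,m-1}`. -/
def bVec' (h m : ℕ) (π : ℕ → Fin m) : Fin (2 ^ m) → ZMod (2 ^ h) :=
  fun i => ((2 ^ (h - 1) *
    ∑ α ∈ Finset.range (m - 1),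
      (bits m i.val (π α)).val * (bits m i.val (π (α + 1))).val : ℕ) : ZMod (2 ^ h))

/-- Hamming distance. -/
def distH {n q : ℕ} (u v : Fin n → ZMod q) : ℕ := (Finset.univ.filter fun i => u i ≠ v i).card

/-- Lee weight. -/
def wtL {n q : ℕ} (v : Fin n → ZMod q) : ℕ := ∑ i : Fin n, min (v i).val (q - (v i).val)


section Aux

variable {M : Type*} [AddCommMonoid M]

/-- Evaluation of a Boolean ANF. -/
def evalB {m : ℕ} (e : Finset (Fin m) → ZMod 2) (x : Fin m → ZMod 2) : ZMod 2 :=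
  ∑ S : Finset (Fin m), e S * ∏ α ∈ S, x α

lemma preimage_map_succ {m : ℕ} (S : Finset (Fin m)) :
    (S.map (Fin.succEmb m)).preimage Fin.succ ((Fin.succ_injective m).injOn) = S := by
  ext b; simp [Finset.mem_preimage, Fin.succEmb]

lemma zero_not_mem_map_succ {m : ℕ} (S : Finset (Fin m)) :
    (0 : Fin (m+1)) ∉ S.map (Fin.succEmb m) := by
  intro h
  obtain ⟨b, -, hb⟩ := Finset.mem_map.1 h
  exact Fin.succ_ne_zero b hb

lemma map_preimage_succ {m : ℕ} (T : Finset (Fin (m+1))) (h0 : 0 ∉ T) :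
    (T.preimage Fin.succ ((Fin.succ_injective m).injOn)).map (Fin.succEmb m) = T := by
  ext a
  refine Fin.cases ?_ ?_ a
  · simp only [Finset.mem_map, Finset.mem_preimage]
    constructor
    · rintro ⟨b, hb, hb2⟩
      exact absurd hb2 (by simpa [Fin.succEmb] using (Fin.succ_ne_zero b))
    · intro h; exact absurd h h0
  · intro b
    simp [Finset.mem_preimage, Fin.succEmb]

lemma insert_zero_preimage_succ {m : ℕ} (T : Finset (Fin (m+1))) (h0 : 0 ∈ T) :
    insert 0 ((T.preimage Fin.succ ((Fin.succ_injective m).injOn)).map (Fin.succEmb m)) = T := by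
  ext a
  refine Fin.cases ?_ ?_ a
  · simp [h0]
  · intro b
    simp [Finset.mem_preimage, Fin.succEmb, (Fin.succ_ne_zero b)]

lemma preimage_insert_zero_map_succ {m : ℕ} (S : Finset (Fin m)) :
    (insert (0 : Fin (m+1)) (S.map (Fin.succEmb m))).preimage Fin.succ
      ((Fin.succ_injective m).injOn) = S := by
  ext b; simp [Finset.mem_preimage, Fin.succEmb, (Fin.succ_ne_zero b)]

lemma sum_finset_fin_succ {m : ℕ} (f : Finset (Fin (m+1)) → M) :
    ∑ T : Finset (Fin (m+1)), f T =
      (∑ S : Finset (Fin m), f (S.map (Fin.succEmb m))) +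
      ∑ S : Finset (Fin m), f (insert 0 (S.map (Fin.succEmb m))) := by
  classical
  rw [← Finset.sum_filter_add_sum_filter_not univ (fun T => (0 : Fin (m+1)) ∉ T) f]
  congr 1
  · refine Finset.sum_bij' (fun T _ => T.preimage Fin.succ ((Fin.succ_injective m).injOn))
      (fun S _ => S.map (Fin.succEmb m)) (fun _ _ => Finset.mem_univ _) ?_ ?_ ?_ ?_
    · intro S _
      simp only [Finset.mem_filter, Finset.mem_univ, true_and]
      exact zero_not_mem_map_succ S
    · intro T hT
      exact map_preimage_succ T (by simpa using (Finset.mem_filter.1 hT).2)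
    · intro S _; exact preimage_map_succ S
    · intro T hT
      rw [map_preimage_succ T (by simpa using (Finset.mem_filter.1 hT).2)]
  · refine Finset.sum_bij' (fun T _ => T.preimage Fin.succ ((Fin.succ_injective m).injOn))
      (fun S _ => insert 0 (S.map (Fin.succEmb m))) (fun _ _ => Finset.mem_univ _) ?_ ?_ ?_ ?_
    · intro S _; simp
    · intro T hT
      exact insert_zero_preimage_succ T (by simpa using (Finset.mem_filter.1 hT).2)
    · intro S _; exact preimage_insert_zero_map_succ S
    · intro T hT
      rw [insert_zero_preimage_succ T (by simpa using (Finset.mem_filter.1 hT).2)]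

lemma evalB_add {m : ℕ} (e f : Finset (Fin m) → ZMod 2) (y : Fin m → ZMod 2) :
    evalB (e + f) y = evalB e y + evalB f y := by
  unfold evalB
  rw [← Finset.sum_add_distrib]
  exact Finset.sum_congr rfl fun S _ => by simp [add_mul]

lemma evalB_cons {m : ℕ} (e : Finset (Fin (m+1)) → ZMod 2) (b : ZMod 2) (y : Fin m → ZMod 2) :
    evalB e (Fin.cons b y) =
      evalB (fun S => e (S.map (Fin.succEmb m))) y +
      b * evalB (fun S => e (insert 0 (S.map (Fin.succEmb m)))) y := by
  unfold evalB
  rw [sum_finset_fin_succ (fun T => e T * ∏ α ∈ T, Fin.cons b y α)]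
  congr 1
  · refine Finset.sum_congr rfl fun S _ => ?_
    rw [Finset.prod_map]
    simp [Fin.succEmb]
  · rw [Finset.mul_sum]
    refine Finset.sum_congr rfl fun S _ => ?_
    rw [Finset.prod_insert (zero_not_mem_map_succ S), Finset.prod_map]
    simp only [Fin.succEmb, Function.Embedding.coeFn_mk, Fin.cons_succ, Fin.cons_zero]
    ring

lemma zmod2_sum (F : ZMod 2 → M) : ∑ b : ZMod 2, F b = F 0 + F 1 := by
  rw [show (univ : Finset (ZMod 2)) = {0, 1} from by decide]
  rw [Finset.sum_pair (by decide)]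

lemma card_filter_evalB_succ {m : ℕ} (e : Finset (Fin (m+1)) → ZMod 2) :
    (univ.filter fun x : Fin (m+1) → ZMod 2 => evalB e x = 1).card =
      (univ.filter fun y : Fin m → ZMod 2 =>
        evalB (fun S => e (S.map (Fin.succEmb m))) y = 1).card +
      (univ.filter fun y : Fin m → ZMod 2 =>
        evalB ((fun S => e (S.map (Fin.succEmb m))) +
          (fun S => e (insert 0 (S.map (Fin.succEmb m))))) y = 1).card := by
  classical
  rw [Finset.card_filter, Finset.card_filter, Finset.card_filter]
  rw [← Fintype.sum_equiv (Fin.consEquiv (fun _ : Fin (m+1) => ZMod 2))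
      (fun z => if evalB e (Fin.cons z.1 z.2) = 1 then 1 else 0)
      (fun x => if evalB e x = 1 then 1 else 0) (fun z => rfl)]
  rw [Fintype.sum_prod_type]
  rw [zmod2_sum (fun b => ∑ y : Fin m → ZMod 2, if evalB e (Fin.cons b y) = 1 then 1 else 0)]
  have h0 : (∑ y : Fin m → ZMod 2, if evalB e (Fin.cons 0 y) = 1 then 1 else 0) =
      ∑ y : Fin m → ZMod 2,
        if evalB (fun S => e (S.map (Fin.succEmb m))) y = 1 then (1:ℕ) else 0 :=
    Finset.sum_congr rfl fun y _ => by rw [evalB_cons]; simp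
  have h1 : (∑ y : Fin m → ZMod 2, if evalB e (Fin.cons 1 y) = 1 then 1 else 0) =
      ∑ y : Fin m → ZMod 2,
        if evalB ((fun S => e (S.map (Fin.succEmb m))) +
          (fun S => e (insert 0 (S.map (Fin.succEmb m))))) y = 1 then (1:ℕ) else 0 :=
    Finset.sum_congr rfl fun y _ => by rw [evalB_cons, evalB_add]; simp
  exact congrArg₂ HAdd.hAdd h0 h1

lemma zmod2_eq_one_of_ne_zero : ∀ z : ZMod 2, z ≠ 0 → z = 1 := by decide

lemma rm_bound (m : ℕ) : ∀ (D : ℕ) (e : Finset (Fin m) → ZMod 2), e ≠ 0 →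
    (∀ S, D < S.card → e S = 0) →
    2 ^ (m - D) ≤ (univ.filter fun x : Fin m → ZMod 2 => evalB e x = 1).card := by
  induction m with
  | zero =>
    intro D e hne _
    have hS : ∀ S : Finset (Fin 0), S = ∅ :=
      fun S => Finset.eq_empty_of_forall_notMem (fun a _ => a.elim0)
    have he : e ∅ = 1 :=
      zmod2_eq_one_of_ne_zero _ (fun h => hne (funext fun S => by rw [hS S]; exact h))
    have hall : ∀ x : Fin 0 → ZMod 2, evalB e x = 1 := by
      intro x
      unfold evalB
      rw [show (univ : Finset (Finset (Fin 0))) = {∅} from by decide]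
      simp [he]
    have heq : (univ.filter fun x : Fin 0 → ZMod 2 => evalB e x = 1) = univ :=
      Finset.filter_eq_self.2 fun x _ => hall x
    rw [heq]
    simp [Finset.card_univ]
  | succ m ih =>
    intro D e hne hdeg
    rw [card_filter_evalB_succ e]
    set e0 : Finset (Fin m) → ZMod 2 := fun S => e (S.map (Fin.succEmb m)) with he0
    set e1 : Finset (Fin m) → ZMod 2 := fun S => e (insert 0 (S.map (Fin.succEmb m))) with he1
    have hdeg0 : ∀ S, D < S.card → e0 S = 0 := fun S hS =>
      hdeg _ (by rwa [Finset.card_map])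
    have hdeg1 : ∀ S : Finset (Fin m), D ≤ S.card → e1 S = 0 := by
      intro S hS
      apply hdeg
      rw [Finset.card_insert_of_notMem (zero_not_mem_map_succ S), Finset.card_map]
      omega
    by_cases h1 : e1 = 0
    · have h0 : e0 ≠ 0 := by
        intro h0
        apply hne; funext T
        by_cases hT : (0 : Fin (m+1)) ∈ T
        · have h := congrFun h1 (T.preimage Fin.succ ((Fin.succ_injective m).injOn))
          rw [he1] at h
          simpa [insert_zero_preimage_succ T hT] using h
        · have h := congrFun h0 (T.preimage Fin.succ ((Fin.succ_injective m).injOn))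
          rw [he0] at h
          simpa [map_preimage_succ T hT] using h
      have key := ih D e0 h0 hdeg0
      have key2 : 2 ^ (m - D) ≤
          (univ.filter fun y : Fin m → ZMod 2 => evalB (e0 + e1) y = 1).card := by
        rw [h1, add_zero]; exact key
      calc 2 ^ (m + 1 - D) ≤ 2 ^ (m - D) + 2 ^ (m - D) := by
            rw [← two_mul, ← pow_succ']
            exact Nat.pow_le_pow_right (by norm_num) (by omega)
        _ ≤ _ := Nat.add_le_add key key2
    · have hD : 1 ≤ D := by
        by_contra hD
        exact h1 (funext fun S => hdeg1 S (by omega))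
      have hdeg1' : ∀ S, D - 1 < S.card → e1 S = 0 := fun S hS => hdeg1 S (by omega)
      have hpow : 2 ^ (m + 1 - D) ≤ 2 ^ (m - (D - 1)) :=
        Nat.pow_le_pow_right (by norm_num) (by omega)
      by_cases h2 : e0 + e1 = 0
      · have he01 : e0 = e1 := by
          funext S
          have h := congrFun h2 S
          simp only [Pi.add_apply, Pi.zero_apply] at h
          revert h; generalize e0 S = a; generalize e1 S = b; revert a b; decide
        have key := ih (D - 1) e0 (he01 ▸ h1) (he01 ▸ hdeg1')
        exact le_trans hpow (le_trans key (Nat.le_add_right _ _))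
      · by_cases h0 : e0 = 0
        · have hee : e0 + e1 = e1 := by rw [h0, zero_add]
          have key : 2 ^ (m - (D - 1)) ≤
              (univ.filter fun y : Fin m → ZMod 2 => evalB (e0 + e1) y = 1).card := by
            rw [hee]; exact ih (D - 1) e1 h1 hdeg1'
          exact le_trans hpow (le_trans key (Nat.le_add_left _ _))
        · have hdeg01 : ∀ S, D < S.card → (e0 + e1) S = 0 := fun S hS => by
            simp only [Pi.add_apply, hdeg0 S hS, hdeg1 S (le_of_lt hS), add_zero]
          have k0 := ih D e0 h0 hdeg0
          have k1 := ih D (e0 + e1) h2 hdeg01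
          calc 2 ^ (m + 1 - D) ≤ 2 ^ (m - D) + 2 ^ (m - D) := by
                rw [← two_mul, ← pow_succ']
                exact Nat.pow_le_pow_right (by norm_num) (by omega)
            _ ≤ _ := Nat.add_le_add k0 k1

lemma bits_bijective (m : ℕ) : Function.Bijective (fun i : Fin (2 ^ m) => bits m i.val) := by
  rw [Fintype.bijective_iff_injective_and_card]
  constructor
  · intro i j hij
    have hb : ∀ k, i.val.testBit k = j.val.testBit k := by
      intro k
      by_cases hk : k < m
      · have := congrFun hij ⟨k, hk⟩
        simp only [bits] at this
        by_cases h1 : i.val.testBit k <;> by_cases h2 : j.val.testBit k <;>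
          simp_all
      · push_neg at hk
        rw [Nat.testBit_lt_two_pow (lt_of_lt_of_le i.isLt (Nat.pow_le_pow_right (by norm_num) hk)),
          Nat.testBit_lt_two_pow (lt_of_lt_of_le j.isLt (Nat.pow_le_pow_right (by norm_num) hk))]
    exact Fin.ext (Nat.eq_of_testBit_eq hb)
  · simp [Fintype.card_fun, ZMod.card]

lemma card_filter_bits {m : ℕ} (Q : (Fin m → ZMod 2) → Prop) [DecidablePred Q] :
    (univ.filter fun x : Fin m → ZMod 2 => Q x).card =
    (univ.filter fun i : Fin (2 ^ m) => Q (bits m i.val)).card := by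
  refine (Finset.card_bij (fun i _ => bits m i.val) ?_ ?_ ?_).symm
  · intro i hi
    simp only [Finset.mem_filter, Finset.mem_univ, true_and] at hi ⊢
    exact hi
  · intro i _ j _ hij
    exact (bits_bijective m).1 hij
  · intro x hx
    obtain ⟨i, hi⟩ := (bits_bijective m).2 x
    exact ⟨i, Finset.mem_filter.2 ⟨Finset.mem_univ _, by
      simp only [hi]; exact (Finset.mem_filter.1 hx).2⟩, hi⟩

lemma lee_lb (t h V : ℕ) (ht : t < h) (hV : V < 2 ^ h) (hmod : V % 2 ^ (t + 1) = 2 ^ t) :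
    2 ^ t ≤ V ∧ 2 ^ t ≤ 2 ^ h - V := by
  have hVge : 2 ^ t ≤ V := hmod ▸ Nat.mod_le V (2 ^ (t + 1))
  refine ⟨hVge, ?_⟩
  rw [Nat.le_sub_iff_add_le (le_of_lt hV)]
  set B := 2 ^ (t + 1) with hB
  set q := V / B with hq
  have hVeq : B * q + 2 ^ t = V := by rw [← hmod]; exact Nat.div_add_mod V B
  have hBs : B * 2 ^ (h - (t + 1)) = 2 ^ h := by
    rw [hB, ← pow_add]; congr 1; omega
  have hqs : q < 2 ^ (h - (t + 1)) := by
    by_contra hc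
    push_neg at hc
    have : 2 ^ h ≤ B * q := by
      rw [← hBs]; exact Nat.mul_le_mul_left B hc
    omega
  have : B * (q + 1) ≤ 2 ^ h := by
    rw [← hBs]; exact Nat.mul_le_mul_left B hqs
  have hB2 : B = 2 ^ t + 2 ^ t := by rw [hB, pow_succ]; ring
  have hBq : B * (q + 1) = B * q + B := by ring
  omega

lemma key_lemma (h t m : ℕ) (ht : t < h) (c : Finset (Fin m) → ZMod (2 ^ h))
    (hdvd : ∀ S, 2 ^ t ∣ (c S).val) (i : Fin (2 ^ m))
    (hodd : evalB (fun S => (((c S).val / 2 ^ t : ℕ) : ZMod 2)) (bits m i.val) = 1) :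
    (anfVec h m c i).val % 2 ^ (t + 1) = 2 ^ t := by
  have hNZ : NeZero (2 ^ h) := ⟨(Nat.two_pow_pos h).ne'⟩
  have hdvdh : (2 : ℕ) ^ (t + 1) ∣ 2 ^ h := pow_dvd_pow 2 (by omega)
  set φ := ZMod.castHom hdvdh (ZMod (2 ^ (t + 1))) with hφ
  set k : Finset (Fin m) → ℕ := fun S => (c S).val / 2 ^ t with hk
  have hck : ∀ S, (c S).val = 2 ^ t * k S := fun S => (Nat.mul_div_cancel' (hdvd S)).symm
  set A : ZMod (2 ^ (t + 1)) :=
    ∑ S : Finset (Fin m), (k S : ZMod (2 ^ (t + 1))) *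
      ∏ α ∈ S, ((bits m i.val α).val : ZMod (2 ^ (t + 1))) with hA
  have h2 : φ (anfVec h m c i) = (2 ^ t : ZMod (2 ^ (t + 1))) * A := by
    unfold anfVec
    rw [map_sum, hA, Finset.mul_sum]
    refine Finset.sum_congr rfl fun S _ => ?_
    rw [map_mul, map_prod]
    have hc : φ (c S) = ((c S).val : ZMod (2 ^ (t + 1))) := by
      rw [ZMod.castHom_apply, ZMod.natCast_val]
    rw [hc, hck S]
    push_cast
    rw [show ∏ α ∈ S, φ (((bits m i.val α).val : ZMod (2 ^ h))) =
        ∏ α ∈ S, ((bits m i.val α).val : ZMod (2 ^ (t + 1))) from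
      Finset.prod_congr rfl fun α _ => map_natCast φ _]
    ring
  have hAodd : A.val % 2 = 1 := by
    have hdvd2 : (2 : ℕ) ∣ 2 ^ (t + 1) := dvd_pow_self 2 (Nat.succ_ne_zero t)
    set ψ := ZMod.castHom hdvd2 (ZMod 2) with hψ
    have hψA : ψ A = ((A.val : ℕ) : ZMod 2) := by
      rw [ZMod.castHom_apply, ZMod.natCast_val]
    have hψA2 : ψ A = 1 := by
      rw [hA, map_sum, ← hodd]
      unfold evalB
      refine Finset.sum_congr rfl fun S _ => ?_
      rw [map_mul, map_prod, map_natCast]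
      congr 1
      refine Finset.prod_congr rfl fun α _ => ?_
      rw [map_natCast, ZMod.natCast_val, ZMod.cast_id]
    have := hψA ▸ hψA2
    have hval := congrArg ZMod.val this
    rwa [ZMod.val_natCast, ZMod.val_one 2] at hval
  have h4 : (2 ^ t : ZMod (2 ^ (t + 1))) * A = (2 ^ t : ZMod (2 ^ (t + 1))) := by
    have hAe : A = ((A.val : ℕ) : ZMod (2 ^ (t + 1))) := by
      rw [ZMod.natCast_val, ZMod.cast_id]
    obtain ⟨q, hq⟩ : ∃ q, A.val = 2 * q + 1 := ⟨A.val / 2, by omega⟩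
    rw [hAe, hq]
    have e1 : ((2 * q + 1 : ℕ) : ZMod (2 ^ (t + 1))) = 2 * (q : ZMod (2 ^ (t + 1))) + 1 := by
      push_cast; ring
    rw [e1]
    have e2 : ((2 : ZMod (2 ^ (t + 1)))) ^ (t + 1) = 0 := by
      rw [show ((2 : ZMod (2 ^ (t + 1)))) ^ (t + 1) =
        ((2 ^ (t + 1) : ℕ) : ZMod (2 ^ (t + 1))) by push_cast; ring, ZMod.natCast_self]
    calc (2 : ZMod (2 ^ (t + 1))) ^ t * (2 * (q : ZMod (2 ^ (t + 1))) + 1)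
        = (2 : ZMod (2 ^ (t + 1))) ^ (t + 1) * q + 2 ^ t := by ring
      _ = 2 ^ t := by rw [e2]; ring
  have h5 : φ (anfVec h m c i) = (2 ^ t : ZMod (2 ^ (t + 1))) := by rw [h2, h4]
  rw [ZMod.castHom_apply, ← ZMod.natCast_val] at h5
  have hval := congrArg ZMod.val h5
  rw [ZMod.val_natCast] at hval
  rw [hval]
  rw [show ((2 : ZMod (2 ^ (t + 1))) ^ t) = ((2 ^ t : ℕ) : ZMod (2 ^ (t + 1))) by push_cast; ring]
  rw [ZMod.val_natCast]
  exact Nat.mod_eq_of_lt (Nat.pow_lt_pow_succ (by norm_num))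

lemma dist_bound (h m D t : ℕ) (ht : t < h) (c : Finset (Fin m) → ZMod (2 ^ h))
    (hdvd : ∀ S, 2 ^ t ∣ (c S).val)
    (hdeg : ∀ S, D < S.card → 2 ^ (t + 1) ∣ (c S).val)
    (hne : ∃ S, ¬ 2 ^ (t + 1) ∣ (c S).val) :
    2 ^ (m - D) ≤ (univ.filter fun i : Fin (2 ^ m) => anfVec h m c i ≠ 0).card ∧
    2 ^ (m - D) * 2 ^ t ≤ wtL (anfVec h m c) := by
  haveI : NeZero (2 ^ h) := ⟨(Nat.two_pow_pos h).ne'⟩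
  set e : Finset (Fin m) → ZMod 2 := fun S => (((c S).val / 2 ^ t : ℕ) : ZMod 2) with he
  have hene : e ≠ 0 := by
    obtain ⟨S, hS⟩ := hne
    intro h0
    have h1 := congrFun h0 S
    rw [he] at h1
    simp only [Pi.zero_apply] at h1
    rw [ZMod.natCast_eq_zero_iff] at h1
    obtain ⟨x, hx⟩ := h1
    refine hS ⟨x, ?_⟩
    have h2 := Nat.mul_div_cancel' (hdvd S)
    rw [hx] at h2
    rw [← h2]; ring
  have hedeg : ∀ S, D < S.card → e S = 0 := by
    intro S hS
    rw [he]
    simp only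
    rw [ZMod.natCast_eq_zero_iff]
    obtain ⟨x, hx⟩ := hdeg S hS
    refine ⟨x, ?_⟩
    rw [hx, show 2 ^ (t + 1) * x = 2 ^ t * (2 * x) by ring,
      Nat.mul_div_cancel_left _ (Nat.two_pow_pos t)]
  have hcard := rm_bound m D e hene hedeg
  rw [card_filter_bits (fun x => evalB e x = 1)] at hcard
  have hsub : (univ.filter fun i : Fin (2 ^ m) => evalB e (bits m i.val) = 1) ⊆
      (univ.filter fun i : Fin (2 ^ m) => anfVec h m c i ≠ 0) := by
    refine Finset.monotone_filter_right _ ?_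
    intro i _ hi
    have hk := key_lemma h t m ht c hdvd i hi
    intro h0
    rw [h0] at hk
    simp only [ZMod.val_zero, Nat.zero_mod] at hk
    exact (Nat.two_pow_pos t).ne' hk.symm
  refine ⟨le_trans hcard (Finset.card_le_card hsub), ?_⟩
  have hmin : ∀ i ∈ (univ.filter fun i : Fin (2 ^ m) => evalB e (bits m i.val) = 1),
      2 ^ t ≤ min (anfVec h m c i).val (2 ^ h - (anfVec h m c i).val) := by
    intro i hi
    have hkey := key_lemma h t m ht c hdvd i ((Finset.mem_filter.1 hi).2)
    have hlb := lee_lb t h (anfVec h m c i).val ht (ZMod.val_lt _) hkey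
    exact le_min hlb.1 hlb.2
  calc 2 ^ (m - D) * 2 ^ t
      ≤ (univ.filter fun i : Fin (2 ^ m) => evalB e (bits m i.val) = 1).card * 2 ^ t :=
        Nat.mul_le_mul_right _ hcard
    _ = ∑ _i ∈ (univ.filter fun i : Fin (2 ^ m) => evalB e (bits m i.val) = 1), 2 ^ t := by
        rw [Finset.sum_const, smul_eq_mul]
    _ ≤ ∑ i ∈ (univ.filter fun i : Fin (2 ^ m) => evalB e (bits m i.val) = 1),
          min (anfVec h m c i).val (2 ^ h - (anfVec h m c i).val) := Finset.sum_le_sum hmin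
    _ ≤ ∑ i : Fin (2 ^ m), min (anfVec h m c i).val (2 ^ h - (anfVec h m c i).val) :=
        Finset.sum_le_sum_of_subset (Finset.filter_subset _ _)
    _ = wtL (anfVec h m c) := rfl

lemma anfVec_add (h m : ℕ) (c d : Finset (Fin m) → ZMod (2 ^ h)) :
    anfVec h m (c + d) = anfVec h m c + anfVec h m d := by
  funext i
  simp only [anfVec, Pi.add_apply, add_mul, Finset.sum_add_distrib]

lemma anfVec_neg (h m : ℕ) (c : Finset (Fin m) → ZMod (2 ^ h)) :
    anfVec h m (-c) = -anfVec h m c := by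
  funext i
  simp only [anfVec, Pi.neg_apply, neg_mul, Pi.neg_apply, Finset.sum_neg_distrib]

lemma anfVec_zero (h m : ℕ) : anfVec h m 0 = 0 := by
  funext i
  simp [anfVec]

lemma zrmCond_add {h p r m : ℕ} {c d : Finset (Fin m) → ZMod (2 ^ h)}
    (hc : zrmCond h p r m c) (hd : zrmCond h p r m d) : zrmCond h p r m (c + d) := by
  intro S
  refine ⟨fun h1 => ?_, fun h1 h2 => ?_⟩
  · simp [Pi.add_apply, (hc S).1 h1, (hd S).1 h1]
  · obtain ⟨u, hu⟩ := (hc S).2 h1 h2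
    obtain ⟨v, hv⟩ := (hd S).2 h1 h2
    exact ⟨u + v, by rw [Pi.add_apply, hu, hv, mul_add]⟩

lemma zrmCond_neg {h p r m : ℕ} {c : Finset (Fin m) → ZMod (2 ^ h)}
    (hc : zrmCond h p r m c) : zrmCond h p r m (-c) := by
  intro S
  refine ⟨fun h1 => ?_, fun h1 h2 => ?_⟩
  · simp [Pi.neg_apply, (hc S).1 h1]
  · obtain ⟨u, hu⟩ := (hc S).2 h1 h2
    exact ⟨-u, by rw [Pi.neg_apply, hu, mul_neg]⟩

lemma zrmCond_incl {h p m : ℕ} {c : Finset (Fin m) → ZMod (2 ^ h)}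
    (hc : zrmCond h p 1 m c) : zrmCond h (p + 1) 2 m c := by
  intro S
  refine ⟨fun h1 => (hc S).1 (by omega), fun h1 h2 => ?_⟩
  rcases Nat.lt_or_ge 1 S.card with hcd | hcd
  · exact ⟨0, by rw [(hc S).1 hcd, mul_zero]⟩
  · obtain ⟨u, hu⟩ := (hc S).2 (by omega) hcd
    exact ⟨u, by rw [hu, show S.card - (1 - p) = S.card - (2 - (p + 1)) from by omega]⟩

/-- ANF coefficients for the quadratic form `2^{h-1}·∑ x_{π(α)}x_{π(α+1)}`. -/
def bCoef (h m : ℕ) (π : ℕ → Fin m) : Finset (Fin m) → ZMod (2 ^ h) :=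
  fun S => (2 ^ (h - 1) : ZMod (2 ^ h)) *
    ∑ α ∈ Finset.range (m - 1), if S = {π α, π (α + 1)} then 1 else 0

lemma pair_ne {m : ℕ} {π : ℕ → Fin m} (hinj : Set.InjOn π (Set.Iio m)) (hm : 2 ≤ m)
    {α : ℕ} (hα : α ∈ Finset.range (m - 1)) : π α ≠ π (α + 1) := by
  rw [Finset.mem_range] at hα
  intro hEq
  have := hinj (by simp only [Set.mem_Iio]; omega) (by simp only [Set.mem_Iio]; omega) hEq
  omega

lemma bCoef_card {h m : ℕ} {π : ℕ → Fin m} (hinj : Set.InjOn π (Set.Iio m)) (hm : 2 ≤ m)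
    (S : Finset (Fin m)) (hS : S.card ≠ 2) : bCoef h m π S = 0 := by
  unfold bCoef
  rw [Finset.sum_eq_zero, mul_zero]
  intro α hα
  rw [if_neg]
  intro hEq
  rw [hEq, Finset.card_pair (pair_ne hinj hm hα)] at hS
  exact hS rfl

lemma zrmCond_bCoef {h p m : ℕ} {π : ℕ → Fin m} (hinj : Set.InjOn π (Set.Iio m))
    (hm : 2 ≤ m) (hp1 : p ≤ 1) (hph : p + 1 < h) :
    zrmCond h (p + 1) 2 m (bCoef h m π) := by
  intro S
  refine ⟨fun h1 => bCoef_card hinj hm S (by omega), fun h1 h2 => ?_⟩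
  rcases Nat.lt_or_ge S.card 2 with hcd | hcd
  · exact ⟨0, by rw [bCoef_card hinj hm S (by omega), mul_zero]⟩
  · have hcd2 : S.card = 2 := by omega
    refine ⟨(2 ^ (h - 1 - (S.card - (2 - (p + 1)))) : ZMod (2 ^ h)) *
      ∑ α ∈ Finset.range (m - 1), if S = {π α, π (α + 1)} then 1 else 0, ?_⟩
    unfold bCoef
    rw [← mul_assoc, ← pow_add]
    congr 2
    omega

lemma bVec'_eq {h m : ℕ} (π : ℕ → Fin m) (hinj : Set.InjOn π (Set.Iio m)) (hm : 2 ≤ m) :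
    bVec' h m π = anfVec h m (bCoef h m π) := by
  funext i
  have e1 : anfVec h m (bCoef h m π) i = ∑ S : Finset (Fin m), ∑ α ∈ Finset.range (m - 1),
      (if S = {π α, π (α + 1)} then
        (2 ^ (h - 1) : ZMod (2 ^ h)) * ∏ β ∈ S, ((bits m i.val β).val : ZMod (2 ^ h))
      else 0) := by
    unfold anfVec bCoef
    refine Finset.sum_congr rfl fun S _ => ?_
    rw [Finset.mul_sum, Finset.sum_mul]
    exact Finset.sum_congr rfl fun α _ => by
      rw [mul_ite, mul_one, mul_zero, ite_mul, zero_mul]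
  have e2 : (∑ S : Finset (Fin m), ∑ α ∈ Finset.range (m - 1),
      (if S = {π α, π (α + 1)} then
        (2 ^ (h - 1) : ZMod (2 ^ h)) * ∏ β ∈ S, ((bits m i.val β).val : ZMod (2 ^ h))
      else 0)) = ∑ α ∈ Finset.range (m - 1),
        (2 ^ (h - 1) : ZMod (2 ^ h)) *
          (((bits m i.val (π α)).val : ZMod (2 ^ h)) *
            ((bits m i.val (π (α + 1))).val : ZMod (2 ^ h))) := by
    rw [Finset.sum_comm]
    refine Finset.sum_congr rfl fun α hα => ?_
    rw [Finset.sum_ite_eq' univ ({π α, π (α + 1)} : Finset (Fin m))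
      (fun S => (2 ^ (h - 1) : ZMod (2 ^ h)) * ∏ β ∈ S, ((bits m i.val β).val : ZMod (2 ^ h)))]
    rw [if_pos (Finset.mem_univ _), Finset.prod_pair (pair_ne hinj hm hα)]
  rw [e1, e2]
  unfold bVec'
  push_cast
  rw [Finset.mul_sum]

lemma val_pow_mul_dvd {h : ℕ} (j t1 : ℕ) (u : ZMod (2 ^ h)) (h1 : t1 ≤ j) (h2 : t1 ≤ h) :
    2 ^ t1 ∣ ((2 ^ j : ZMod (2 ^ h)) * u).val := by
  haveI : NeZero (2 ^ h) := ⟨(Nat.two_pow_pos h).ne'⟩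
  have heq : ((2 : ZMod (2 ^ h)) ^ j * u) = ((2 ^ j * u.val : ℕ) : ZMod (2 ^ h)) := by
    push_cast
    rw [ZMod.natCast_val, ZMod.cast_id]
  rw [heq, ZMod.val_natCast]
  exact (Nat.dvd_mod_iff (pow_dvd_pow 2 h2)).2 (Dvd.dvd.mul_right (pow_dvd_pow 2 h1) _)

end Aux



/-- Class II codes with `k = 0`, `r = 1`: the union over all permutations `π` of
`{0,…,m-1}` of the cosets `b'_π + ZRM_{2^h}^p(1,m)` is contained in `ZRM_{2^h}^{p+1}(2,m)`,
hence has minimum Hamming distance at least `2^{m-2}` and minimum Lee distance at least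
`2^{m-1+p}`.  (Definedness of `ZRM_{2^h}^p(1,m)` requires `p ≤ 1`, and `h > p+1`.) -/
theorem stmt_16 (h p m : ℕ) (hph : p + 1 < h) (hp1 : p ≤ 1) (hm : 2 ≤ m) :
    (∀ w, (∃ π : ℕ → Fin m, Set.InjOn π (Set.Iio m) ∧ π '' Set.Iio m = Set.univ ∧
        ∃ a ∈ ZRM h p 1 m, w = bVec' h m π + a) →
      w ∈ ZRM h (p + 1) 2 m) ∧
    (∀ u v : Fin (2 ^ m) → ZMod (2 ^ h),
      (∃ π : ℕ → Fin m, Set.InjOn π (Set.Iio m) ∧ π '' Set.Iio m = Set.univ ∧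
        ∃ a ∈ ZRM h p 1 m, u = bVec' h m π + a) →
      (∃ π : ℕ → Fin m, Set.InjOn π (Set.Iio m) ∧ π '' Set.Iio m = Set.univ ∧
        ∃ a ∈ ZRM h p 1 m, v = bVec' h m π + a) →
      u ≠ v →
      2 ^ (m - 2) ≤ distH u v ∧ 2 ^ (m - 1 + p) ≤ wtL (u - v)) := by
  
  haveI : NeZero (2 ^ h) := ⟨(Nat.two_pow_pos h).ne'⟩
  have part1 : ∀ w, (∃ π : ℕ → Fin m, Set.InjOn π (Set.Iio m) ∧ π '' Set.Iio m = Set.univ ∧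
      ∃ a ∈ ZRM h p 1 m, w = bVec' h m π + a) → w ∈ ZRM h (p + 1) 2 m := by
    rintro w ⟨π, hinj, -, a, ⟨ca, hca, haeq⟩, hw⟩
    exact ⟨bCoef h m π + ca, zrmCond_add (zrmCond_bCoef hinj hm hp1 hph) (zrmCond_incl hca),
      by rw [hw, haeq, anfVec_add, bVec'_eq π hinj hm]⟩
  refine ⟨part1, ?_⟩
  intro u v hu hv huv
  obtain ⟨cu, hcu, hueq⟩ := part1 u hu
  obtain ⟨cv, hcv, hveq⟩ := part1 v hv
  set c : Finset (Fin m) → ZMod (2 ^ h) := cu + (-cv) with hcdef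
  have hc : zrmCond h (p + 1) 2 m c := zrmCond_add hcu (zrmCond_neg hcv)
  have huvc : u - v = anfVec h m c := by
    rw [hueq, hveq, hcdef, anfVec_add, anfVec_neg, sub_eq_add_neg]
  have hcne : c ≠ 0 := by
    intro h0
    exact huv (sub_eq_zero.1 (by rw [huvc, h0, anfVec_zero]))
  obtain ⟨S₀, hS₀⟩ := Function.ne_iff.1 hcne
  have hS₀' : c S₀ ≠ 0 := by simpa using hS₀
  have hS₀v : (c S₀).val ≠ 0 := fun hz => hS₀' (ZMod.val_eq_zero _ |>.1 hz)
  have hQ : ∃ t, ∃ S, ¬ 2 ^ (t + 1) ∣ (c S).val := by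
    refine ⟨h - 1, S₀, ?_⟩
    rw [show h - 1 + 1 = h from by omega]
    intro hdv
    exact hS₀v (Nat.eq_zero_of_dvd_of_lt hdv (ZMod.val_lt _))
  set t := Nat.find hQ with htdef
  have hne : ∃ S, ¬ 2 ^ (t + 1) ∣ (c S).val := Nat.find_spec hQ
  have htle : t ≤ h - 1 := Nat.find_le (by
    refine ⟨S₀, ?_⟩
    rw [show h - 1 + 1 = h from by omega]
    intro hdv
    exact hS₀v (Nat.eq_zero_of_dvd_of_lt hdv (ZMod.val_lt _)))
  have ht : t < h := by omega
  have hdvd : ∀ S, 2 ^ t ∣ (c S).val := by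
    intro S
    rcases Nat.eq_zero_or_pos t with h0 | h0
    · rw [h0]; simp
    · have hmin := Nat.find_min hQ (show t - 1 < t by omega)
      push_neg at hmin
      have h2 := hmin S
      rwa [show t - 1 + 1 = t from by omega] at h2
  set D := min 2 (t + 1 - p) with hDdef
  have hD2 : D ≤ 2 := min_le_left _ _
  have hDr : D ≤ t + 1 - p := min_le_right _ _
  have hDp : D + p ≤ t + 1 := by omega
  have hdeg : ∀ S, D < S.card → 2 ^ (t + 1) ∣ (c S).val := by
    intro S hS
    rcases Nat.lt_or_ge 2 S.card with hcd | hcd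
    · rw [(hc S).1 hcd, ZMod.val_zero]
      exact dvd_zero _
    · have hDlt : D < 2 := by omega
      have hDeq : D = t + 1 - p := by
        rcases le_total 2 (t + 1 - p) with hle | hle
        · rw [hDdef, min_eq_left hle] at hDlt; omega
        · rw [hDdef, min_eq_right hle]
      have hminlt : t + 1 - p < S.card := by omega
      obtain ⟨u', hu'⟩ := (hc S).2 (by omega) hcd
      have hE : t + 1 ≤ S.card - (2 - (p + 1)) := by omega
      rw [hu']
      exact val_pow_mul_dvd _ _ _ hE (by omega)
  obtain ⟨HH, LL⟩ := dist_bound h m D t ht c hdvd hdeg hne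
  constructor
  · have hdist : distH u v = (univ.filter fun i : Fin (2 ^ m) => anfVec h m c i ≠ 0).card := by
      unfold distH
      congr 1
      apply Finset.filter_congr
      intro i _
      rw [show anfVec h m c i = u i - v i from by rw [← huvc, Pi.sub_apply]]
      exact sub_ne_zero.symm
    rw [hdist]
    exact le_trans (Nat.pow_le_pow_right (by norm_num) (by omega)) HH
  · rw [huvc]
    refine le_trans ?_ LL
    rw [← pow_add]
    exact Nat.pow_le_pow_right (by norm_num) (by omega)
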